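/- Let D be a Eulerian directed graph on n vertices with all degrees positive. Then (1 − λ_1)² ≤ σ_0² ≤ 1, where λ_1 is the first non-trivial eigenvalue of the Laplacian of D and σ_0 is the second largest singular value of L_0 = T^{-1/2} A T^{-1/2}. -/

import Mathlib

open Matrix Polynomial

noncomputable section

/-- The (out-)degree of a vertex in a directed graph with adjacency matrix `A`. -/
def ddeg {V : Type*} [Fintype V] (A : Matrix V V ℝ) (x : V) : ℝ := ∑ y, A x y

/-- The diagonal matrix `T^{-1/2}` of a directed graph. -/
def dInvSqrtT {V : Type*} [Fintype V] [DecidableEq V] (A : Matrix V V ℝ) : Matrix V V ℝ :=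
  Matrix.diagonal fun x => (Real.sqrt (ddeg A x))⁻¹

/-- The non-symmetric Laplacian `vecL = I - T^{-1/2} A T^{-1/2}` of a directed graph. -/
def dvecL {V : Type*} [Fintype V] [DecidableEq V] (A : Matrix V V ℝ) : Matrix V V ℝ :=
  1 - dInvSqrtT A * A * dInvSqrtT A

/-- The Laplacian `(vecL + vecLᵀ)/2` of a directed graph. -/
def dLap {V : Type*} [Fintype V] [DecidableEq V] (A : Matrix V V ℝ) : Matrix V V ℝ :=
  (1 / 2 : ℝ) • (dvecL A + (dvecL A)ᵀ)

/-- The matrix `L_α = I - (1-α) vecL = T^{1/2} P_α T^{-1/2}`. -/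
def dLalpha {V : Type*} [Fintype V] [DecidableEq V] (A : Matrix V V ℝ) (α : ℝ) :
    Matrix V V ℝ :=
  1 - (1 - α) • dvecL A

/-- The transition matrix `P_α = α I + (1-α) T⁻¹ A` of the α-lazy random walk. -/
def dTrans {V : Type*} [Fintype V] [DecidableEq V] (A : Matrix V V ℝ) (α : ℝ) :
    Matrix V V ℝ :=
  α • (1 : Matrix V V ℝ) + (1 - α) • ((Matrix.diagonal fun x => (ddeg A x)⁻¹) * A)

/-- The volume of a set of vertices of a directed graph. -/
def dvol {V : Type*} [Fintype V] (A : Matrix V V ℝ) (X : Finset V) : ℝ :=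
  ∑ x ∈ X, ddeg A x

/-- The unit vector `φ₀` with `φ₀(x) = √(d_x)/√(vol D)`. -/
def dphi {V : Type*} [Fintype V] (A : Matrix V V ℝ) : V → ℝ :=
  fun x => Real.sqrt (ddeg A x) / Real.sqrt (dvol A Finset.univ)

/-- Euclidean norm of a (row or column) vector. -/
def euclNorm {m : Type*} [Fintype m] (f : m → ℝ) : ℝ := Real.sqrt (∑ x, f x ^ 2)

/-- The set of values `‖L_α f‖ / ‖f‖` over nonzero vectors `f` orthogonal to `φ₀ᵀ`;
its greatest element is the second largest singular value `σ_α` of `L_α`. -/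
def sigmaSet {V : Type*} [Fintype V] [DecidableEq V] (A : Matrix V V ℝ) (α : ℝ) : Set ℝ :=
  {r | ∃ f : V → ℝ, f ≠ 0 ∧ (∑ x, f x * dphi A x) = 0 ∧
    r = euclNorm (dLalpha A α *ᵥ f) / euclNorm f}

/-- `μ` lists the eigenvalues of the square matrix `M` (with multiplicity)
in non-decreasing order. -/
def IsEigenSeq {m : Type*} [Fintype m] [DecidableEq m] (M : Matrix m m ℝ) {n : ℕ}
    (μ : Fin n → ℝ) : Prop :=
  Monotone μ ∧ M.charpoly = ∏ i, (X - C (μ i))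

section Aux

variable {V : Type*} [Fintype V] [DecidableEq V] (A : Matrix V V ℝ)

lemma dLalpha_zero : dLalpha A 0 = dInvSqrtT A * A * dInvSqrtT A := by
  simp [dLalpha, dvecL]

lemma dM_mulVec (f : V → ℝ) (x : V) :
    ((dInvSqrtT A * A * dInvSqrtT A) *ᵥ f) x
      = (Real.sqrt (ddeg A x))⁻¹ * ∑ y, A x y * ((Real.sqrt (ddeg A y))⁻¹ * f y) := by
  simp [dInvSqrtT, mulVec, dotProduct, diagonal_mul, mul_diagonal, Finset.mul_sum, mul_assoc]

lemma dM_transpose_mulVec (f : V → ℝ) (x : V) :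
    ((dInvSqrtT A * A * dInvSqrtT A)ᵀ *ᵥ f) x
      = (Real.sqrt (ddeg A x))⁻¹ * ∑ y, A y x * ((Real.sqrt (ddeg A y))⁻¹ * f y) := by
  simp only [dInvSqrtT, mulVec, dotProduct, transpose_apply, Matrix.mul_apply,
    diagonal_apply, ite_mul, mul_ite, zero_mul, mul_zero, Finset.sum_ite_eq,
    Finset.sum_ite_eq', Finset.mem_univ, if_true, Finset.mul_sum]
  refine Finset.sum_congr rfl fun y _ => ?_
  ring

lemma sum_col (hEuler : ∀ x, (∑ y, A x y) = ∑ y, A y x) (y : V) :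
    ∑ x, A x y = ddeg A y := (hEuler y).symm

lemma dM_contract (h01 : ∀ x y, A x y = 0 ∨ A x y = 1)
    (hEuler : ∀ x, (∑ y, A x y) = ∑ y, A y x) (hdegpos : ∀ x, 0 < ddeg A x) (f : V → ℝ) :
    ∑ x, (((dInvSqrtT A * A * dInvSqrtT A) *ᵥ f) x) ^ 2 ≤ ∑ x, f x ^ 2 := by
  set c : V → ℝ := fun y => (Real.sqrt (ddeg A y))⁻¹ * f y with hc
  have hA0 : ∀ x y, 0 ≤ A x y := fun x y => by rcases h01 x y with h | h <;> simp [h]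
  have key : ∀ x, (((dInvSqrtT A * A * dInvSqrtT A) *ᵥ f) x) ^ 2
      ≤ ∑ y, A x y * (c y) ^ 2 := by
    intro x
    rw [dM_mulVec, mul_pow]
    have base := Finset.sum_mul_sq_le_sq_mul_sq Finset.univ
      (fun y => Real.sqrt (A x y)) (fun y => Real.sqrt (A x y) * c y)
    have e1 : ∀ y, Real.sqrt (A x y) * (Real.sqrt (A x y) * c y) = A x y * c y := by
      intro y; rw [← mul_assoc, Real.mul_self_sqrt (hA0 x y)]
    have e2 : ∀ y, (Real.sqrt (A x y)) ^ 2 = A x y := fun y => Real.sq_sqrt (hA0 x y)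
    have e3 : ∀ y, (Real.sqrt (A x y) * c y) ^ 2 = A x y * (c y) ^ 2 := by
      intro y; rw [mul_pow, e2]
    rw [Finset.sum_congr rfl fun y _ => e1 y, Finset.sum_congr rfl fun y _ => e2 y,
      Finset.sum_congr rfl fun y _ => e3 y] at base
    have hdx : (0:ℝ) < ddeg A x := hdegpos x
    have hinv : ((Real.sqrt (ddeg A x))⁻¹) ^ 2 = (ddeg A x)⁻¹ := by
      rw [inv_pow, Real.sq_sqrt hdx.le]
    rw [hinv]
    calc (ddeg A x)⁻¹ * (∑ y, A x y * c y) ^ 2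
        ≤ (ddeg A x)⁻¹ * ((∑ y, A x y) * ∑ y, A x y * (c y) ^ 2) := by
          exact mul_le_mul_of_nonneg_left base (inv_nonneg.mpr hdx.le)
      _ = ∑ y, A x y * (c y) ^ 2 := by
          rw [show (∑ y, A x y) = ddeg A x from rfl, ← mul_assoc,
            inv_mul_cancel₀ hdx.ne', one_mul]
  calc ∑ x, (((dInvSqrtT A * A * dInvSqrtT A) *ᵥ f) x) ^ 2
      ≤ ∑ x, ∑ y, A x y * (c y) ^ 2 := Finset.sum_le_sum fun x _ => key x
    _ = ∑ y, (∑ x, A x y) * (c y) ^ 2 := by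
        rw [Finset.sum_comm]; simp [Finset.sum_mul]
    _ = ∑ y, f y ^ 2 := by
        refine Finset.sum_congr rfl fun y _ => ?_
        rw [sum_col A hEuler, hc]
        have h1 : (0:ℝ) < ddeg A y := hdegpos y
        rw [mul_pow, inv_pow, Real.sq_sqrt h1.le]
        field_simp

lemma dM_phi (hdegpos : ∀ x, 0 < ddeg A x) :
    (dInvSqrtT A * A * dInvSqrtT A) *ᵥ dphi A = dphi A := by
  funext x
  rw [dM_mulVec]
  have e : ∀ y, A x y * ((Real.sqrt (ddeg A y))⁻¹ * dphi A y)
      = A x y * (Real.sqrt (dvol A Finset.univ))⁻¹ := by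
    intro y
    have hy := hdegpos y
    have hs : Real.sqrt (ddeg A y) ≠ 0 := (Real.sqrt_pos.mpr hy).ne'
    unfold dphi
    field_simp
  rw [Finset.sum_congr rfl fun y _ => e y, ← Finset.sum_mul]
  have hx := hdegpos x
  have hsx : Real.sqrt (ddeg A x) ≠ 0 := (Real.sqrt_pos.mpr hx).ne'
  show (Real.sqrt (ddeg A x))⁻¹ * (ddeg A x * (Real.sqrt (dvol A Finset.univ))⁻¹) = _
  unfold dphi
  rw [div_eq_mul_inv]
  rw [← Real.mul_self_sqrt hx.le]
  field_simp
  rw [Real.sqrt_sq (Real.sqrt_nonneg _)]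

lemma dMT_phi (hEuler : ∀ x, (∑ y, A x y) = ∑ y, A y x) (hdegpos : ∀ x, 0 < ddeg A x) :
    (dInvSqrtT A * A * dInvSqrtT A)ᵀ *ᵥ dphi A = dphi A := by
  funext x
  rw [dM_transpose_mulVec]
  have e : ∀ y, A y x * ((Real.sqrt (ddeg A y))⁻¹ * dphi A y)
      = A y x * (Real.sqrt (dvol A Finset.univ))⁻¹ := by
    intro y
    have hy := hdegpos y
    have hs : Real.sqrt (ddeg A y) ≠ 0 := (Real.sqrt_pos.mpr hy).ne'
    unfold dphi
    field_simp
  rw [Finset.sum_congr rfl fun y _ => e y, ← Finset.sum_mul, sum_col A hEuler]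
  have hx := hdegpos x
  have hsx : Real.sqrt (ddeg A x) ≠ 0 := (Real.sqrt_pos.mpr hx).ne'
  unfold dphi
  rw [div_eq_mul_inv]
  rw [← Real.mul_self_sqrt hx.le]
  field_simp
  rw [Real.sqrt_sq (Real.sqrt_nonneg _)]

lemma dLap_eq : dLap A = 1 - (1 / 2 : ℝ) •
    (dInvSqrtT A * A * dInvSqrtT A + (dInvSqrtT A * A * dInvSqrtT A)ᵀ) := by
  unfold dLap dvecL
  ext i j
  by_cases h : i = j <;>
    simp [Matrix.add_apply, Matrix.sub_apply, Matrix.smul_apply, Matrix.transpose_apply,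
      Matrix.one_apply, h] <;> ring

lemma dLap_symm : (dLap A)ᵀ = dLap A := by
  unfold dLap
  rw [transpose_smul, transpose_add, transpose_transpose, add_comm]

lemma dLap_herm : (dLap A).IsHermitian := by
  have h : (dLap A)ᴴ = (dLap A)ᵀ := by
    ext i j; simp [Matrix.conjTranspose_apply]
  rw [Matrix.IsHermitian, h, dLap_symm]

lemma dLap_phi (hEuler : ∀ x, (∑ y, A x y) = ∑ y, A y x) (hdegpos : ∀ x, 0 < ddeg A x) :
    dLap A *ᵥ dphi A = 0 := by
  rw [dLap_eq, sub_mulVec, smul_mulVec, add_mulVec, dM_phi A hdegpos,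
    dMT_phi A hEuler hdegpos]
  funext x
  simp
  ring

lemma quad_eq (f : V → ℝ) :
    f ⬝ᵥ ((dInvSqrtT A * A * dInvSqrtT A) *ᵥ f) = (∑ x, f x ^ 2) - f ⬝ᵥ (dLap A *ᵥ f) := by
  set M := dInvSqrtT A * A * dInvSqrtT A with hM
  have hMT : f ⬝ᵥ (Mᵀ *ᵥ f) = f ⬝ᵥ (M *ᵥ f) := by
    rw [Matrix.mulVec_transpose, dotProduct_comm, Matrix.dotProduct_mulVec]
  have hff : f ⬝ᵥ f = ∑ x, f x ^ 2 := by
    unfold dotProduct; exact Finset.sum_congr rfl fun x _ => (sq (f x)) ▸ (pow_two (f x)).symm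
  rw [dLap_eq, ← hM, sub_mulVec, smul_mulVec, add_mulVec, one_mulVec, dotProduct_sub,
    dotProduct_smul, dotProduct_add, hMT, hff, smul_eq_mul]
  ring

lemma orth_basis (hH : (dLap A).IsHermitian) (i j : V) :
    ∑ x, hH.eigenvectorBasis i x * hH.eigenvectorBasis j x = if i = j then 1 else 0 := by
  have h := orthonormal_iff_ite.mp hH.eigenvectorBasis.orthonormal i j
  simpa [PiLp.inner_apply, RCLike.inner_apply, conj_trivial, mul_comm] using h

lemma charpoly_unitary_conj {n : Type*} [Fintype n] [DecidableEq n]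
    (U : Matrix.unitaryGroup n ℝ) (B : Matrix n n ℝ) :
    ((U : Matrix n n ℝ) * B * star (U : Matrix n n ℝ)).charpoly = B.charpoly := by
  have hUc : (U : Matrix n n ℝ) * star (U : Matrix n n ℝ) = 1 := by
    simpa using U.2.2
  have hmap : (C : ℝ →+* ℝ[X]).mapMatrix (U : Matrix n n ℝ) *
      (C : ℝ →+* ℝ[X]).mapMatrix (star (U : Matrix n n ℝ)) = 1 := by
    rw [← RingHom.map_mul, hUc]; simp
  have key : charmatrix ((U : Matrix n n ℝ) * B * star (U : Matrix n n ℝ)) =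
      ((C : ℝ →+* ℝ[X]).mapMatrix (U : Matrix n n ℝ)) * charmatrix B *
        ((C : ℝ →+* ℝ[X]).mapMatrix (star (U : Matrix n n ℝ))) := by
    rw [charmatrix, charmatrix, mul_sub, sub_mul]
    congr 1
    · rw [show (scalar n) (X : ℝ[X]) = (X : ℝ[X]) • (1 : Matrix n n ℝ[X]) by
        simp [Matrix.scalar_apply, Matrix.smul_eq_diagonal_mul]]
      rw [Matrix.mul_smul, mul_one, Matrix.smul_mul, hmap]
    · rw [← RingHom.map_mul, ← RingHom.map_mul]
  rw [Matrix.charpoly, key, Matrix.charpoly, det_mul, det_mul, mul_right_comm,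
    ← det_mul, hmap]
  simp

lemma charpoly_diag {n : Type*} [Fintype n] [DecidableEq n] (d : n → ℝ) :
    (Matrix.diagonal d).charpoly = ∏ i, (X - C (d i)) := by
  have h : charmatrix (Matrix.diagonal d) = Matrix.diagonal (fun i => X - C (d i)) := by
    ext i j
    by_cases h : i = j
    · subst h; simp [charmatrix_apply_eq]
    · simp [charmatrix_apply_ne _ _ _ h, Matrix.diagonal_apply_ne _ h]
  rw [Matrix.charpoly, h, det_diagonal]

lemma charpoly_herm {n : Type*} [Fintype n] [DecidableEq n] {B : Matrix n n ℝ}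
    (hB : B.IsHermitian) : B.charpoly = ∏ i, (X - C (hB.eigenvalues i)) := by
  have h := hB.spectral_theorem
  have h2 : B.charpoly
      = (Matrix.diagonal (RCLike.ofReal ∘ hB.eigenvalues) : Matrix n n ℝ).charpoly := by
    conv_lhs => rw [h]
    exact charpoly_unitary_conj _ _
  rw [h2]
  have h3 : (RCLike.ofReal ∘ hB.eigenvalues : n → ℝ) = hB.eigenvalues := by
    funext i; simp [RCLike.ofReal]
  rw [h3, charpoly_diag]

lemma multiset_eq_of_prod_eq {k : ℕ} (μ : Fin k → ℝ) {n : Type*} [Fintype n] (ev : n → ℝ)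
    (h : ∏ i, (X - C (μ i)) = ∏ x, (X - C (ev x))) :
    Multiset.map μ Finset.univ.val = Multiset.map ev Finset.univ.val := by
  have e1 : ((Multiset.map μ Finset.univ.val).map fun a => X - C a).prod
      = ∏ i, (X - C (μ i)) := by
    rw [Multiset.map_map]; exact (Finset.prod_eq_multiset_prod _ _).symm
  have e2 : ((Multiset.map ev Finset.univ.val).map fun a => X - C a).prod
      = ∏ x, (X - C (ev x)) := by
    rw [Multiset.map_map]; exact (Finset.prod_eq_multiset_prod _ _).symm
  calc Multiset.map μ Finset.univ.val
      = (((Multiset.map μ Finset.univ.val).map fun a => X - C a).prod).roots :=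
        (roots_multiset_prod_X_sub_C _).symm
    _ = (((Multiset.map ev Finset.univ.val).map fun a => X - C a).prod).roots := by
        rw [e1, e2, h]
    _ = Multiset.map ev Finset.univ.val := roots_multiset_prod_X_sub_C _

end Aux

/-- `(1-λ₁)² ≤ σ₀² ≤ 1` for a Eulerian directed graph. -/
theorem stmt_4 {V : Type*} [Fintype V] [DecidableEq V]
    (A : Matrix V V ℝ)
    (h01 : ∀ x y, A x y = 0 ∨ A x y = 1)
    (hEuler : ∀ x, (∑ y, A x y) = ∑ y, A y x)
    (hdegpos : ∀ x, 0 < ddeg A x)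
    (n : ℕ) (hn : Fintype.card V = n) (hn2 : 2 ≤ n)
    (μ : Fin n → ℝ) (hμ : IsEigenSeq (dLap A) μ)
    (σ₀ : ℝ) (hσ₀ : IsGreatest (sigmaSet A 0) σ₀) :
    (1 - μ ⟨1, by omega⟩) ^ 2 ≤ σ₀ ^ 2 ∧ σ₀ ^ 2 ≤ 1 := by
  have hH : (dLap A).IsHermitian := dLap_herm A
  set ev : V → ℝ := hH.eigenvalues with hev
  set v : V → V → ℝ := fun i x => hH.eigenvectorBasis i x with hv
  have hmul : ∀ i, dLap A *ᵥ v i = ev i • v i := fun i => hH.mulVec_eigenvectorBasis i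
  have horth : ∀ i j, ∑ x, v i x * v j x = if i = j then 1 else 0 := orth_basis A hH
  set t : ℝ := μ ⟨1, by omega⟩ with ht
  -- multiset equality of eigenvalue lists
  have hms : Multiset.map μ Finset.univ.val = Multiset.map ev Finset.univ.val :=
    multiset_eq_of_prod_eq μ ev (by rw [← hμ.2, charpoly_herm hH])
  -- basic facts about eigenvectors
  have hsq1 : ∀ i : V, ∑ x, (v i x) ^ 2 = 1 := by
    intro i
    have h := horth i i
    simp at h
    rw [← h]
    exact Finset.sum_congr rfl fun x _ => sq (v i x)
  have hvne : ∀ i : V, v i ≠ 0 := by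
    intro i hcon
    have h2 := hsq1 i
    rw [hcon] at h2
    simp at h2
  have hdot1 : ∀ i : V, v i ⬝ᵥ v i = 1 := by
    intro i
    have h := horth i i
    simpa [dotProduct] using h
  have hq_eig : ∀ i : V,
      v i ⬝ᵥ ((dInvSqrtT A * A * dInvSqrtT A) *ᵥ v i) = 1 - ev i := by
    intro i
    rw [quad_eq, hsq1 i, hmul i, dotProduct_smul, smul_eq_mul,
      hdot1 i, mul_one]
  -- nonnegativity of the quadratic form of dLap
  have hQnn : ∀ f : V → ℝ, 0 ≤ f ⬝ᵥ (dLap A *ᵥ f) := by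
    intro f
    have hquad := quad_eq A f
    set M := dInvSqrtT A * A * dInvSqrtT A with hM
    have hcon := dM_contract A h01 hEuler hdegpos f
    have hCS : (f ⬝ᵥ (M *ᵥ f)) ^ 2 ≤ (∑ x, f x ^ 2) * (∑ x, ((M *ᵥ f) x) ^ 2) :=
      Finset.sum_mul_sq_le_sq_mul_sq Finset.univ f (M *ᵥ f)
    have hS : (0:ℝ) ≤ ∑ x, f x ^ 2 := Finset.sum_nonneg fun x _ => sq_nonneg _
    nlinarith [hquad, hcon, hCS, hS, sq_nonneg (∑ x, f x ^ 2 - f ⬝ᵥ (M *ᵥ f)),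
      sq_nonneg (∑ x, f x ^ 2 + f ⬝ᵥ (M *ᵥ f))]
  -- eigenvalues are nonnegative
  have hev_nn : ∀ i : V, 0 ≤ ev i := by
    intro i
    have h := hQnn (v i)
    rw [hmul i, dotProduct_smul, smul_eq_mul, hdot1 i, mul_one] at h
    exact h
  -- t is an eigenvalue hence t ≥ 0
  have htmem : ∃ i : V, ev i = t := by
    have h1 : t ∈ Multiset.map μ Finset.univ.val :=
      Multiset.mem_map.mpr ⟨⟨1, by omega⟩, by simp, rfl⟩
    rw [hms] at h1
    obtain ⟨i, _, hi⟩ := Multiset.mem_map.mp h1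
    exact ⟨i, hi⟩
  have ht0 : 0 ≤ t := by obtain ⟨i, hi⟩ := htmem; rw [← hi]; exact hev_nn i
  -- orthogonality of eigenvectors with nonzero eigenvalue to φ
  have hLphi := dLap_phi A hEuler hdegpos
  have horthphi : ∀ i : V, ev i ≠ 0 → ∑ x, v i x * dphi A x = 0 := by
    intro i hne
    have h1 : (dLap A *ᵥ v i) ⬝ᵥ dphi A = 0 := by
      rw [dotProduct_comm, Matrix.dotProduct_mulVec, ← Matrix.mulVec_transpose,
        dLap_symm, hLphi]
      exact zero_dotProduct _
    rw [hmul i, smul_dotProduct, smul_eq_mul] at h1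
    rcases mul_eq_zero.mp h1 with h | h
    · exact absurd h hne
    · exact h
  -- construct the test vector f
  obtain ⟨f, hf0, horthf, hq⟩ : ∃ f : V → ℝ, f ≠ 0 ∧ (∑ x, f x * dphi A x) = 0 ∧
      (1 - t) ^ 2 * (∑ x, f x ^ 2) ^ 2
        ≤ (f ⬝ᵥ ((dInvSqrtT A * A * dInvSqrtT A) *ᵥ f)) ^ 2 := by
    by_cases hcase : t ≤ 1
    · obtain ⟨a, b, hab, hevat, hevbt⟩ : ∃ a b : V, a ≠ b ∧ ev a ≤ t ∧ ev b ≤ t := by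
        have hc1 : 1 < (Finset.univ.filter (fun i : Fin n => μ i ≤ t)).card := by
          refine Finset.one_lt_card.mpr ⟨⟨0, by omega⟩, ?_, ⟨1, by omega⟩, ?_, ?_⟩
          · exact Finset.mem_filter.mpr ⟨Finset.mem_univ _, hμ.1 (by simp)⟩
          · exact Finset.mem_filter.mpr ⟨Finset.mem_univ _, le_refl _⟩
          · simp
        have hc : 1 < Multiset.countP (fun r => r ≤ t) (Multiset.map ev Finset.univ.val) := by
          rw [← hms, Multiset.countP_map]
          exact hc1
        rw [Multiset.countP_map] at hc
        have hc2 : 1 < (Finset.univ.filter (fun x : V => ev x ≤ t)).card := hc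
        obtain ⟨a, ha, b, hb, hab⟩ := Finset.one_lt_card.mp hc2
        exact ⟨a, b, hab, (Finset.mem_filter.mp ha).2, (Finset.mem_filter.mp hb).2⟩
      rcases eq_or_ne (ev a) 0 with hea | hea
      · rcases eq_or_ne (ev b) 0 with heb | heb
        · -- both relevant eigenvalues are 0
          set sa := ∑ x, v a x * dphi A x with hsa
          set sb := ∑ x, v b x * dphi A x with hsb
          by_cases hsa0 : sa = 0
          · refine ⟨v a, hvne a, hsa0, ?_⟩
            rw [hq_eig a, hsq1 a, hea]
            nlinarith
          · set f : V → ℝ := fun x => sb * v a x - sa * v b x with hf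
            have hLf : dLap A *ᵥ f = 0 := by
              have hfe : f = sb • v a - sa • v b := by funext x; simp [hf]
              rw [hfe, Matrix.mulVec_sub, Matrix.mulVec_smul, Matrix.mulVec_smul,
                hmul a, hmul b, hea, heb]
              simp
            have hsum2 : ∑ x, f x ^ 2 = sb ^ 2 + sa ^ 2 := by
              have e : ∀ x, f x ^ 2 = sb ^ 2 * (v a x * v a x)
                  - (2 * sa * sb) * (v a x * v b x) + sa ^ 2 * (v b x * v b x) := by
                intro x; simp only [hf]; ring
              rw [Finset.sum_congr rfl fun x _ => e x, Finset.sum_add_distrib,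
                Finset.sum_sub_distrib, ← Finset.mul_sum, ← Finset.mul_sum, ← Finset.mul_sum,
                horth a a, horth a b, horth b b]
              simp [hab]
            refine ⟨f, ?_, ?_, ?_⟩
            · intro hcon
              rw [hcon] at hsum2
              simp at hsum2
              have h2 : sa ^ 2 = 0 := by nlinarith [sq_nonneg sa, sq_nonneg sb]
              exact hsa0 (by nlinarith [sq_nonneg sa])
            · have e : ∀ x, f x * dphi A x
                  = sb * (v a x * dphi A x) - sa * (v b x * dphi A x) := by
                intro x; simp only [hf]; ring
              rw [Finset.sum_congr rfl fun x _ => e x, Finset.sum_sub_distrib,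
                ← Finset.mul_sum, ← Finset.mul_sum, ← hsa, ← hsb]
              ring
            · rw [quad_eq, hLf, dotProduct_zero, sub_zero, hsum2]
              have h2 : (1 - t) ^ 2 ≤ 1 := by nlinarith
              nlinarith [sq_nonneg (sb ^ 2 + sa ^ 2)]
        · refine ⟨v b, hvne b, horthphi b heb, ?_⟩
          rw [hq_eig b, hsq1 b]
          have h1 : 1 - t ≤ 1 - ev b := by linarith
          have h2 : 0 ≤ 1 - t := by linarith
          nlinarith
      · refine ⟨v a, hvne a, horthphi a hea, ?_⟩
        rw [hq_eig a, hsq1 a]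
        have h1 : 1 - t ≤ 1 - ev a := by linarith
        have h2 : 0 ≤ 1 - t := by linarith
        nlinarith
    · push_neg at hcase
      obtain ⟨i, hi⟩ := htmem
      have hne : ev i ≠ 0 := by rw [hi]; positivity
      refine ⟨v i, hvne i, horthphi i hne, ?_⟩
      rw [hq_eig i, hsq1 i, hi]
      norm_num
  -- final assembly
  set M := dInvSqrtT A * A * dInvSqrtT A with hM
  set S := ∑ x, f x ^ 2 with hS
  set T := ∑ x, ((M *ᵥ f) x) ^ 2 with hT
  have hS0 : 0 < S := by
    obtain ⟨x, hx⟩ := Function.ne_iff.mp hf0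
    have h1 : f x ^ 2 ≤ S :=
      Finset.single_le_sum (fun i _ => sq_nonneg (f i)) (Finset.mem_univ x)
    have h2 : 0 < f x ^ 2 := pow_two_pos_of_ne_zero hx
    linarith
  have hT0 : 0 ≤ T := Finset.sum_nonneg fun x _ => sq_nonneg _
  have hCS : (f ⬝ᵥ (M *ᵥ f)) ^ 2 ≤ S * T :=
    Finset.sum_mul_sq_le_sq_mul_sq Finset.univ f (M *ᵥ f)
  have hkey : (1 - t) ^ 2 * S ≤ T := by nlinarith [hq.trans hCS]
  have hrmem : Real.sqrt T / Real.sqrt S ∈ sigmaSet A 0 := by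
    refine ⟨f, hf0, horthf, ?_⟩
    unfold euclNorm
    rw [dLalpha_zero, ← hM, ← hS, ← hT]
  have hrle := hσ₀.2 hrmem
  have hrnn : 0 ≤ Real.sqrt T / Real.sqrt S :=
    div_nonneg (Real.sqrt_nonneg _) (Real.sqrt_nonneg _)
  have hr2 : (Real.sqrt T / Real.sqrt S) ^ 2 = T / S := by
    rw [div_pow, Real.sq_sqrt hT0, Real.sq_sqrt hS0.le]
  constructor
  · calc (1 - t) ^ 2 ≤ T / S := (le_div_iff₀ hS0).mpr hkey
      _ = (Real.sqrt T / Real.sqrt S) ^ 2 := hr2.symm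
      _ ≤ σ₀ ^ 2 := pow_le_pow_left₀ hrnn hrle 2
  · obtain ⟨g, hg0, -, hgr⟩ := hσ₀.1
    rw [dLalpha_zero, ← hM] at hgr
    have hcon := dM_contract A h01 hEuler hdegpos g
    have hSg0 : 0 < ∑ x, g x ^ 2 := by
      obtain ⟨x, hx⟩ := Function.ne_iff.mp hg0
      have h1 : g x ^ 2 ≤ ∑ x, g x ^ 2 :=
        Finset.single_le_sum (fun i _ => sq_nonneg (g i)) (Finset.mem_univ x)
      have h2 : 0 < g x ^ 2 := pow_two_pos_of_ne_zero hx
      linarith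
    have h1 : euclNorm (M *ᵥ g) ≤ euclNorm g := by
      unfold euclNorm
      exact Real.sqrt_le_sqrt hcon
    have h2 : 0 < euclNorm g := by
      unfold euclNorm
      exact Real.sqrt_pos.mpr hSg0
    have hσle : σ₀ ≤ 1 := by
      rw [hgr]
      exact (div_le_one h2).mpr h1
    have hσnn : 0 ≤ σ₀ := by
      rw [hgr]
      unfold euclNorm
      exact div_nonneg (Real.sqrt_nonneg _) (Real.sqrt_nonneg _)
    exact pow_le_one₀ hσnn hσle
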